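/- Fix α > 0. For sufficiently small x₀ > 0 define p(x) = 1 + ln(ln(1/x^{1/α}))/ln(1/x^{1/α}) for 0 < x < x₀. Then there exist C > 0 and λ₀ > 0 such that for all 0 < λ ≤ λ₀, |{x ∈ (0,x₀) : p(x) ≤ 1+λ}| ≤ C λ^{α/λ} (ln(1/λ))^{-α/λ}; consequently L^{p(·)}((0,x₀)) ⊂ L(log L)^α((0,x₀)). -/

import Mathlib

open MeasureTheory Real Set Filter
open scoped ENNReal

/-- Luxemburg norm of the variable Lebesgue space `L^{p(·)}(Ω)` (finite exponent). -/
noncomputable def luxNorm {E : Type*} [MeasureSpace E] (Ω : Set E) (p : E → ℝ) (f : E → ℝ) :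
    ℝ≥0∞ :=
  ⨅ (t : ℝ) (_ : 0 < t)
    (_ : ∫⁻ x in Ω, ENNReal.ofReal ((|f x| / t) ^ p x) ≤ 1),
    ENNReal.ofReal t

/-- Luxemburg norm of the Orlicz space with Young function `M`. -/
noncomputable def orliczNorm {E : Type*} [MeasureSpace E] (Ω : Set E) (M : ℝ → ℝ) (f : E → ℝ) :
    ℝ≥0∞ :=
  ⨅ (t : ℝ) (_ : 0 < t)
    (_ : ∫⁻ x in Ω, ENNReal.ofReal (M (|f x| / t)) ≤ 1),
    ENNReal.ofReal t

private lemma inf_ne_top_iff {Q : ℝ → Prop} :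
    (⨅ (t : ℝ) (_ : 0 < t) (_ : Q t), ENNReal.ofReal t) ≠ ∞ ↔ ∃ t, 0 < t ∧ Q t := by
  constructor
  · intro h
    by_contra hc
    push_neg at hc
    apply h
    rw [iInf_eq_top]
    intro t
    rcases lt_or_ge 0 t with h1 | h1
    · have h2 : ¬ Q t := hc t h1
      simp [h2]
    · simp [not_lt.2 h1]
  · rintro ⟨t, h1, h2⟩ h
    have hle : (⨅ (t : ℝ) (_ : 0 < t) (_ : Q t), ENNReal.ofReal t) ≤ ENNReal.ofReal t := by
      refine iInf_le_of_le t ?_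
      rw [iInf_pos h1, iInf_pos h2]
    rw [h, top_le_iff] at hle
    exact ENNReal.ofReal_ne_top hle


private lemma half_le_log_two : (1/2 : ℝ) ≤ Real.log 2 := by
  rw [Real.le_log_iff_exp_le (by norm_num : (0:ℝ) < 2)]
  have h : Real.exp (1/2) * Real.exp (1/2) = Real.exp 1 := by
    rw [← Real.exp_add]; norm_num
  nlinarith [Real.exp_pos (1/2 : ℝ), Real.exp_one_lt_d9]

set_option maxHeartbeats 800000 in
private lemma summable_aux : Summable (fun n : ℕ => 4/((n:ℝ)+1)^2) := by
  have h1 : Summable (fun n : ℕ => 1/((n:ℝ)^2)) := by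
    rw [summable_one_div_nat_pow]
    norm_num
  have h2 : Summable (fun n : ℕ => 1/(((n+1 : ℕ)):ℝ)^2) := (summable_nat_add_iff 1).2 h1
  have h3 : Summable (fun n : ℕ => 1/((n:ℝ)+1)^2) := by
    convert h2 using 2 with n
    push_cast
    ring
  have h4 := h3.mul_left 4
  convert h4 using 2 with n
  · rfl
  ring

set_option maxHeartbeats 1000000 in
private lemma M_fin {a : ℝ} (ha : 0 < a) (hla : 1 ≤ Real.log (1/a)) :
    ∫⁻ x in Ioo (0:ℝ) a, ENNReal.ofReal (1/(x * Real.log (1/x)^2)) < ⊤ := by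
  have hcover : Ioo (0:ℝ) a ⊆ ⋃ n : ℕ, Ico (a/2^(n+1)) (a/2^n) := by
    intro x hx
    obtain ⟨hx0, hxa⟩ := hx
    have hex : ∃ m : ℕ, a ≤ x * 2^m := by
      obtain ⟨N, hN⟩ := exists_nat_gt (a/x)
      refine ⟨N, ?_⟩
      have h2 : (N:ℝ) < 2^N := by
        exact_mod_cast (Nat.lt_two_pow_self (n := N))
      have h3 : a/x < 2^N := lt_trans hN h2
      rw [div_lt_iff₀ hx0] at h3
      linarith
    have hm := Nat.find_spec hex
    have hm0 : Nat.find hex ≠ 0 := by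
      intro h0
      rw [h0] at hm
      simp at hm
      linarith
    obtain ⟨n, hn⟩ := Nat.exists_eq_succ_of_ne_zero hm0
    have hmin : ¬ (a ≤ x * 2^n) := Nat.find_min hex (by omega)
    push_neg at hmin
    refine mem_iUnion.2 ⟨n, ?_, ?_⟩
    · rw [div_le_iff₀ (by positivity)]
      rw [hn] at hm
      exact hm
    · rw [lt_div_iff₀ (by positivity)]
      exact hmin
  have hpiece : ∀ n : ℕ, ∫⁻ x in Ico (a/2^(n+1)) (a/2^n),
      ENNReal.ofReal (1/(x * Real.log (1/x)^2)) ≤ ENNReal.ofReal (4/((n:ℝ)+1)^2) := by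
    intro n
    have hstep : ∀ x ∈ Ico (a/2^(n+1)) (a/2^n),
        ENNReal.ofReal (1/(x * Real.log (1/x)^2)) ≤
          ENNReal.ofReal ((2^(n+1)/a) * (4/((n:ℝ)+1)^2)) := by
      intro x hx
      obtain ⟨hx1, hx2⟩ := hx
      have hx0 : 0 < x := lt_of_lt_of_le (by positivity) hx1
      apply ENNReal.ofReal_le_ofReal
      have hlb : ((n:ℝ)+1)/2 ≤ Real.log (1/x) := by
        have h1 : (2:ℝ)^n / a < 1/x := by
          rw [div_lt_div_iff₀ (by linarith) hx0]
          rw [lt_div_iff₀ (by positivity : (0:ℝ) < 2^n)] at hx2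
          linarith
        have h2 : Real.log ((2:ℝ)^n / a) ≤ Real.log (1/x) :=
          Real.log_le_log (by positivity) h1.le
        have h3 : Real.log ((2:ℝ)^n / a) = n * Real.log 2 + Real.log (1/a) := by
          rw [show (2:ℝ)^n / a = 2^n * (1/a) by ring,
            Real.log_mul (by positivity) (by positivity), Real.log_pow]
        have h4 := half_le_log_two
        have h5 : (0:ℝ) ≤ n := Nat.cast_nonneg n
        nlinarith
      have hlbpos : (0:ℝ) < ((n:ℝ)+1)/2 := by positivity
      have hsq : (((n:ℝ)+1)/2)^2 ≤ Real.log (1/x)^2 := by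
        nlinarith
      have hden : (a/2^(n+1)) * (((n:ℝ)+1)/2)^2 ≤ x * Real.log (1/x)^2 :=
        mul_le_mul hx1 hsq (by positivity) hx0.le
      have hdenpos : (0:ℝ) < (a/2^(n+1)) * (((n:ℝ)+1)/2)^2 := by positivity
      have h6 := one_div_le_one_div_of_le hdenpos hden
      apply le_trans h6
      rw [one_div, mul_inv, ← one_div, ← one_div]
      have e1 : 1/(a/2^(n+1)) = 2^(n+1)/a := by field_simp
      have e2 : 1/((((n:ℝ)+1)/2)^2) = 4/((n:ℝ)+1)^2 := by
        rw [div_pow]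
        field_simp
        norm_num
      rw [e1, e2]
    calc ∫⁻ x in Ico (a/2^(n+1)) (a/2^n), ENNReal.ofReal (1/(x * Real.log (1/x)^2))
        ≤ ∫⁻ _ in Ico (a/2^(n+1)) (a/2^n),
            ENNReal.ofReal ((2^(n+1)/a) * (4/((n:ℝ)+1)^2)) :=
          setLIntegral_mono measurable_const hstep
      _ = ENNReal.ofReal ((2^(n+1)/a) * (4/((n:ℝ)+1)^2)) *
            volume (Ico (a/2^(n+1)) (a/2^n)) := setLIntegral_const _ _
      _ = ENNReal.ofReal ((2^(n+1)/a) * (4/((n:ℝ)+1)^2)) *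
            ENNReal.ofReal (a/2^n - a/2^(n+1)) := by rw [Real.volume_Ico]
      _ = ENNReal.ofReal ((2^(n+1)/a) * (4/((n:ℝ)+1)^2) * (a/2^n - a/2^(n+1))) :=
          (ENNReal.ofReal_mul (by positivity)).symm
      _ ≤ ENNReal.ofReal (4/((n:ℝ)+1)^2) := by
          apply ENNReal.ofReal_le_ofReal
          have e3 : a/2^n - a/2^(n+1) = a/2^(n+1) := by
            field_simp
            ring
          rw [e3]
          rw [show (2^(n+1)/a) * (4/((n:ℝ)+1)^2) * (a/2^(n+1)) =
            (4/((n:ℝ)+1)^2) * ((2^(n+1)/a) * (a/2^(n+1))) by ring]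
          have e4 : (2^(n+1)/a) * (a/2^(n+1)) = 1 := by
            field_simp
          rw [e4, mul_one]
  calc ∫⁻ x in Ioo (0:ℝ) a, ENNReal.ofReal (1/(x * Real.log (1/x)^2))
      ≤ ∫⁻ x in ⋃ n : ℕ, Ico (a/2^(n+1)) (a/2^n),
          ENNReal.ofReal (1/(x * Real.log (1/x)^2)) :=
        lintegral_mono_set hcover
    _ ≤ ∑' n : ℕ, ∫⁻ x in Ico (a/2^(n+1)) (a/2^n),
          ENNReal.ofReal (1/(x * Real.log (1/x)^2)) :=
        lintegral_iUnion_le _ _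
    _ ≤ ∑' n : ℕ, ENNReal.ofReal (4/((n:ℝ)+1)^2) := ENNReal.tsum_le_tsum hpiece
    _ = ENNReal.ofReal (∑' n : ℕ, 4/((n:ℝ)+1)^2) :=
        (ENNReal.ofReal_tsum_of_nonneg (fun n => by positivity) summable_aux).symm
    _ < ⊤ := ENNReal.ofReal_lt_top


private lemma log_le_two_sqrt {u : ℝ} (hu : 0 < u) : Real.log u ≤ 2 * Real.sqrt u := by
  have h1 : Real.log (Real.sqrt u) ≤ Real.sqrt u - 1 :=
    Real.log_le_sub_one_of_pos (Real.sqrt_pos.2 hu)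
  rw [Real.log_sqrt hu.le] at h1
  nlinarith [Real.sqrt_nonneg u]

private lemma sq_log_le {u : ℝ} (hu : 1 ≤ u) : (Real.log u)^2 ≤ 4 * u := by
  have h1 := log_le_two_sqrt (by linarith : (0:ℝ) < u)
  have h2 : (0:ℝ) ≤ Real.log u := Real.log_nonneg hu
  have h3 : Real.sqrt u ^ 2 = u := Real.sq_sqrt (by linarith)
  nlinarith [Real.sqrt_nonneg u]

set_option maxHeartbeats 2000000 in
private lemma pointwise_bound (α u : ℝ) (hα : 0 < α) (hu0 : 0 < u)
    (hlogu : 1 ≤ Real.log u) (hau : 1 ≤ α*u) (hv1 : 1 ≤ α*u - (α+2)*Real.log u)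
    (g : ℝ) (hg : 0 ≤ g) :
    g * Real.log (Real.exp 1 + g) ^ α ≤
      Real.exp (α * Real.log (2*α) + 4*(α+2)) * g ^ (1 + Real.log u / u) +
      Real.exp (α*u - (α+2)*Real.log u) * (2*(α*u)) ^ α := by
  set L := Real.log u with hL
  clear_value L
  have hu1 : 1 ≤ u := by
    have := (Real.le_log_iff_exp_le hu0).1 (hL ▸ hlogu)
    nlinarith [Real.add_one_le_exp (1:ℝ)]
  have hsq : L^2 ≤ 4*u := by rw [hL]; exact sq_log_le hu1
  have hlam_pos : 0 < L / u := div_pos (by linarith) hu0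
  set v₁ := α*u - (α+2)*L with hv₁def
  clear_value v₁
  have hone_le_e : (1:ℝ) ≤ Real.exp 1 := by nlinarith [Real.add_one_le_exp (1:ℝ)]
  have he2 : (2:ℝ) ≤ Real.exp 1 := by nlinarith [Real.add_one_le_exp (1:ℝ)]
  have hlogeg : 0 ≤ Real.log (Real.exp 1 + g) := Real.log_nonneg (by linarith)
  rcases le_or_gt g (Real.exp v₁) with hcase | hcase
  · -- small g
    have hb : Real.log (Real.exp 1 + g) ≤ 2*(α*u) := by
      have h1 : Real.exp 1 + g ≤ 2 * Real.exp v₁ := by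
        have h2 : Real.exp 1 ≤ Real.exp v₁ := Real.exp_le_exp.2 hv1
        linarith
      have h3 : Real.log (Real.exp 1 + g) ≤ Real.log (2 * Real.exp v₁) :=
        Real.log_le_log (by linarith) h1
      have h4 : Real.log (2 * Real.exp v₁) = Real.log 2 + v₁ := by
        rw [Real.log_mul two_ne_zero (Real.exp_ne_zero _), Real.log_exp]
      have h5 : Real.log 2 ≤ 1 := by
        have := Real.log_le_sub_one_of_pos (by norm_num : (0:ℝ) < 2); linarith
      have h6 : (0:ℝ) ≤ (α+2)*L := by nlinarith
      rw [h4] at h3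
      nlinarith
    have hmain : g * Real.log (Real.exp 1 + g) ^ α ≤ Real.exp v₁ * (2*(α*u)) ^ α :=
      mul_le_mul hcase (Real.rpow_le_rpow hlogeg hb hα.le) (Real.rpow_nonneg hlogeg α)
        (Real.exp_pos _).le
    have hnn : 0 ≤ Real.exp (α * Real.log (2*α) + 4*(α+2)) * g ^ (1 + L / u) := by positivity
    linarith
  · -- large g
    have hgpos : 0 < g := lt_trans (Real.exp_pos _) hcase
    have hge : Real.exp 1 ≤ g := le_trans (Real.exp_le_exp.2 hv1) hcase.le
    set v := Real.log g with hv
    clear_value v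
    have hvv1 : v₁ ≤ v := by
      have := Real.log_le_log (Real.exp_pos _) hcase.le
      rw [Real.log_exp] at this
      rw [hv]
      exact this
    have hv_pos : 1 ≤ v := le_trans hv1 hvv1
    have hclaim1 : Real.log (Real.exp 1 + g) ≤ 2 * v := by
      have h1 : Real.exp 1 + g ≤ g * g := by nlinarith
      have h2 : Real.log (Real.exp 1 + g) ≤ Real.log (g*g) :=
        Real.log_le_log (by positivity) h1
      rw [Real.log_mul (ne_of_gt hgpos) (ne_of_gt hgpos)] at h2
      linarith
    have hdiv : ∀ a b : ℝ, a * u ≤ b * u → a ≤ b := fun a b h =>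
      le_of_mul_le_mul_right h hu0
    have e2 : (L/u*v)*u = L*v := by field_simp
    have hlog2au : Real.log (2*(α*u)) = Real.log (2*α) + L := by
      rw [show 2*(α*u) = (2*α)*u by ring, Real.log_mul (by positivity) (ne_of_gt hu0), hL]
    have hclaim2 : α * Real.log (2*v) ≤ (α * Real.log (2*α) + 4*(α+2)) + L/u * v := by
      rcases le_or_gt v (α*u) with hv2 | hv2
      · have h1 : Real.log (2*v) ≤ Real.log (2*(α*u)) :=
          Real.log_le_log (by linarith) (by linarith)
        rw [hlog2au] at h1
        apply hdiv
        have e3 : (L/u*v₁)*u = L*v₁ := by field_simp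
        have h2 : L/u*v₁ ≤ L/u*v := mul_le_mul_of_nonneg_left hvv1 hlam_pos.le
        -- need: α*log(2v)*u ≤ (c + L/u*v)*u
        have h3 : α * L - 4*(α+2) ≤ L/u*v := by
          apply le_trans _ h2
          apply hdiv
          rw [e3]
          nlinarith
        nlinarith [mul_le_mul_of_nonneg_right h1 hα.le, mul_le_mul_of_nonneg_right h3 hu0.le]
      · have hau0 : 0 < α*u := by linarith
        have h1 : Real.log (v/(α*u)) ≤ v/(α*u) - 1 :=
          Real.log_le_sub_one_of_pos (by positivity)
        have h2 : Real.log (2*v) = Real.log (2*(α*u)) + Real.log (v/(α*u)) := by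
          rw [← Real.log_mul (by positivity) (by positivity)]
          congr 1
          field_simp
        have h4 : α*(v/(α*u)) = v/u := by field_simp
        have h5a : α * Real.log (v/(α*u)) ≤ v/u - α := by
          have h5b := mul_le_mul_of_nonneg_left h1 hα.le
          rw [mul_sub, mul_one, h4] at h5b
          linarith
        have h5 : α * Real.log (2*v) ≤ α*Real.log (2*α) + α*L + (v/u - α) := by
          calc α * Real.log (2*v) = α*(Real.log (2*α) + L) + α * Real.log (v/(α*u)) := by
                rw [h2, hlog2au]; ring
            _ ≤ α*(Real.log (2*α) + L) + (v/u - α) := by linarith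
            _ = α*Real.log (2*α) + α*L + (v/u - α) := by ring
        have key : α*L + (v/u - α) ≤ 4*(α+2) + L/u*v := by
          apply hdiv
          have expand1 : (α*L + (v/u - α))*u = α*L*u + v - α*u := by
            field_simp; ring
          have expand2 : (4*(α+2) + L/u*v)*u = 4*(α+2)*u + L*v := by
            field_simp
          rw [expand1, expand2]
          have hA : 0 ≤ (v - α*u)*(L - 1) := mul_nonneg (sub_nonneg.2 hv2.le) (sub_nonneg.2 hlogu)
          have hB : (0:ℝ) ≤ 4*(α+2)*u := by positivity
          nlinarith [hA, hB]
        linarith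
    have hclaim3 : Real.log (Real.exp 1 + g) ^ α ≤
        Real.exp (α * Real.log (2*α) + 4*(α+2)) * g ^ (L/u) := by
      have h2v : (0:ℝ) < 2*v := by linarith
      have h1 : Real.log (Real.exp 1 + g) ^ α ≤ (2*v) ^ α :=
        Real.rpow_le_rpow hlogeg hclaim1 hα.le
      have h2 : (2*v) ^ α = Real.exp (Real.log (2*v) * α) := Real.rpow_def_of_pos h2v α
      have h3 : g ^ (L/u) = Real.exp (v * (L/u)) := by
        rw [Real.rpow_def_of_pos hgpos, ← hv]
      rw [h2] at h1
      rw [h3, ← Real.exp_add]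
      apply le_trans h1
      apply Real.exp_le_exp.2
      nlinarith [hclaim2]
    have hfinal : g * Real.log (Real.exp 1 + g) ^ α ≤
        Real.exp (α * Real.log (2*α) + 4*(α+2)) * g ^ (1 + L / u) := by
      have h1 : g ^ (1 + L/u) = g * g ^ (L/u) := by
        rw [Real.rpow_add hgpos, Real.rpow_one]
      rw [h1]
      calc g * Real.log (Real.exp 1 + g) ^ α
          ≤ g * (Real.exp (α * Real.log (2*α) + 4*(α+2)) * g ^ (L/u)) :=
            mul_le_mul_of_nonneg_left hclaim3 hg
        _ = Real.exp (α * Real.log (2*α) + 4*(α+2)) * (g * g ^ (L/u)) := by ring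
    have hnn : 0 ≤ Real.exp v₁ * (2*(α*u)) ^ α := by positivity
    linarith

set_option maxHeartbeats 3000000 in
/-- (Example 2.) For `p(x) = 1 + ln(ln(1/x^{1/α}))/ln(1/x^{1/α})` on `(0,x₀)` with `x₀`
small, the distribution function satisfies
`|{x : p(x) ≤ 1+λ}| ≤ C λ^{α/λ}(ln(1/λ))^{-α/λ}`, and hence
`L^{p(·)}((0,x₀)) ⊂ L(log L)^α((0,x₀))`. -/
theorem stmt_18 (α : ℝ) (hα : 0 < α) :
    ∃ x₁ ∈ Ioo (0:ℝ) 1, ∀ x₀ ∈ Ioo (0:ℝ) x₁, ∃ C > (0:ℝ), ∃ lam0 > (0:ℝ),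
      (∀ l ∈ Ioc (0:ℝ) lam0,
        volume {x ∈ Ioo (0:ℝ) x₀ |
            1 + Real.log (Real.log (1 / x ^ (1/α))) / Real.log (1 / x ^ (1/α)) ≤ 1 + l} ≤
          ENNReal.ofReal (C * l ^ (α/l) * Real.log (1/l) ^ (-(α/l)))) ∧
      (∀ f : ℝ → ℝ, Measurable f →
        luxNorm (Ioo (0:ℝ) x₀)
            (fun x => 1 + Real.log (Real.log (1 / x ^ (1/α))) / Real.log (1 / x ^ (1/α))) f
          ≠ ∞ →
        orliczNorm (Ioo (0:ℝ) x₀) (fun t => t * Real.log (Real.exp 1 + t) ^ α) f ≠ ∞) := by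
  set K := max (Real.exp 2) (((2*α+5)/α)^2) with hK
  have hK1 : Real.exp 2 ≤ K := le_max_left _ _
  have hK2 : ((2*α+5)/α)^2 ≤ K := le_max_right _ _
  have hKpos : 0 < K := lt_of_lt_of_le (Real.exp_pos 2) hK1
  have hαK : 20 ≤ α*K := by
    have h1 : α*((2*α+5)/α)^2 ≤ α*K := mul_le_mul_of_nonneg_left hK2 hα.le
    have h2 : α*((2*α+5)/α)^2 = (2*α+5)^2/α := by field_simp
    rw [h2] at h1
    have h3 : 20 ≤ (2*α+5)^2/α := by
      rw [le_div_iff₀ hα]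
      nlinarith
    linarith
  have hαKpos : 0 < α*K := by linarith
  refine ⟨Real.exp (-(α*K)), ⟨Real.exp_pos _, Real.exp_lt_one_iff.2 (by linarith)⟩, ?_⟩
  intro x₀ hx₀
  obtain ⟨hx₀0, hx₀1⟩ := hx₀
  have hx₀lt1 : x₀ < 1 := lt_trans hx₀1 (Real.exp_lt_one_iff.2 (by linarith))
  have hlogx₀ : α*K < Real.log (1/x₀) := by
    have h2 : Real.log x₀ < -(α*K) := by
      have := Real.log_lt_log hx₀0 hx₀1
      rwa [Real.log_exp] at this
    rw [one_div, Real.log_inv]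
    linarith
  -- facts about u(x)
  have hufact : ∀ x ∈ Ioo (0:ℝ) x₀,
      Real.log (1/x^(1/α)) = Real.log (1/x) / α ∧ K < Real.log (1/x^(1/α)) := by
    intro x hx
    obtain ⟨hx0, hxx₀⟩ := hx
    have hval : Real.log (1/x^(1/α)) = Real.log (1/x) / α := by
      rw [show (1:ℝ)/x^(1/α) = (x^(1/α))⁻¹ from one_div _, Real.log_inv, Real.log_rpow hx0,
        show (1:ℝ)/x = x⁻¹ from one_div _, Real.log_inv]
      ring
    refine ⟨hval, ?_⟩
    rw [hval]
    have h1 : x < Real.exp (-(α*K)) := lt_trans hxx₀ hx₀1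
    have h2 : Real.log x < -(α*K) := by
      have := Real.log_lt_log hx0 h1
      rwa [Real.log_exp] at this
    rw [one_div, Real.log_inv, lt_div_iff₀ hα]
    nlinarith
  refine ⟨1, one_pos, Real.exp (-1), Real.exp_pos _, ?_, ?_⟩
  · -- Part 1 : measure estimate
    intro l hl
    obtain ⟨hl0, hl1⟩ := hl
    have hloglel : Real.log l ≤ -1 := by
      have := Real.log_le_log hl0 hl1
      rwa [Real.log_exp] at this
    have hl_lt1 : l < 1 := by
      have h0 : Real.exp (-1:ℝ) < 1 := Real.exp_lt_one_iff.2 (by norm_num)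
      linarith
    have hlog1l : 1 ≤ Real.log (1/l) := by
      rw [one_div, Real.log_inv]; linarith
    have hlog1l_pos : 0 < Real.log (1/l) := by linarith
    have hsub : {x ∈ Ioo (0:ℝ) x₀ |
          1 + Real.log (Real.log (1/x^(1/α))) / Real.log (1/x^(1/α)) ≤ 1 + l}
        ⊆ Ioc 0 (Real.exp (-((α/l) * (Real.log (1/l) + Real.log (Real.log (1/l)))))) := by
      rintro x ⟨hxm, hple⟩
      obtain ⟨hx0, hxx₀⟩ := hxm
      obtain ⟨huval, huK⟩ := hufact x ⟨hx0, hxx₀⟩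
      set u := Real.log (1/x^(1/α)) with hudef
      have hu0 : 0 < u := lt_trans hKpos huK
      have hdivle : Real.log u / u ≤ l := by linarith
      have hlogu_le : Real.log u ≤ l * u := by
        have h2 := mul_le_mul_of_nonneg_right hdivle hu0.le
        rwa [div_mul_cancel₀ _ (ne_of_gt hu0)] at h2
      have hegtu : Real.exp 2 < u := lt_of_le_of_lt hK1 huK
      have hu_gt : 1/l < u := by
        by_contra hcon
        push_neg at hcon
        have h2 : l * u ≤ 1 := by
          have h3 := mul_le_mul_of_nonneg_left hcon hl0.le
          rwa [mul_one_div, div_self (ne_of_gt hl0)] at h3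
        have h3 : Real.log u ≤ 1 := le_trans hlogu_le h2
        have h4 : u ≤ Real.exp 1 := by
          rw [← Real.exp_log hu0]
          exact Real.exp_le_exp.2 h3
        have h5 : Real.exp 1 < Real.exp 2 := Real.exp_lt_exp.2 (by norm_num)
        linarith
      have hT : Real.log (1/l) / l ≤ u := by
        rw [div_le_iff₀ hl0]
        have h1 : Real.log (1/l) ≤ Real.log u :=
          Real.log_le_log (by positivity) hu_gt.le
        nlinarith [hlogu_le]
      have hlogu2 : Real.log (1/l) + Real.log (Real.log (1/l)) ≤ Real.log u := by
        have h1 : Real.log (Real.log (1/l) / l) ≤ Real.log u :=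
          Real.log_le_log (by positivity) hT
        rw [Real.log_div (ne_of_gt hlog1l_pos) (ne_of_gt hl0)] at h1
        have e : Real.log (1/l) = -Real.log l := by rw [one_div, Real.log_inv]
        linarith
      have hfin : Real.log (1/l) + Real.log (Real.log (1/l)) ≤ l * u :=
        le_trans hlogu2 hlogu_le
      have hxval : x = Real.exp (-(α*u)) := by
        have h1 : α*u = Real.log (1/x) := by rw [huval]; field_simp
        rw [h1, one_div, Real.log_inv, neg_neg, Real.exp_log hx0]
      refine ⟨hx0, ?_⟩
      rw [hxval]
      apply Real.exp_le_exp.2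
      have h1 := mul_le_mul_of_nonneg_left hfin (le_of_lt (div_pos hα hl0))
      have h2 : (α/l)*(l*u) = α*u := by field_simp
      nlinarith [h1, h2]
    calc volume {x ∈ Ioo (0:ℝ) x₀ |
          1 + Real.log (Real.log (1/x^(1/α))) / Real.log (1/x^(1/α)) ≤ 1 + l}
        ≤ volume (Ioc 0 (Real.exp (-((α/l) * (Real.log (1/l) + Real.log (Real.log (1/l))))))) :=
          measure_mono hsub
      _ = ENNReal.ofReal
            (Real.exp (-((α/l) * (Real.log (1/l) + Real.log (Real.log (1/l))))) - 0) :=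
          Real.volume_Ioc
      _ ≤ ENNReal.ofReal (1 * l^(α/l) * Real.log (1/l)^(-(α/l))) := by
          apply ENNReal.ofReal_le_ofReal
          rw [sub_zero, one_mul]
          have e1 : l^(α/l) = Real.exp (Real.log l * (α/l)) := Real.rpow_def_of_pos hl0 _
          have e2 : Real.log (1/l)^(-(α/l))
              = Real.exp (Real.log (Real.log (1/l)) * (-(α/l))) :=
            Real.rpow_def_of_pos hlog1l_pos _
          rw [e1, e2, ← Real.exp_add]
          apply le_of_eq
          apply congrArg
          have e : Real.log (1/l) = -Real.log l := by rw [one_div, Real.log_inv]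
          rw [e]
          ring
  · -- Part 2 : embedding
    intro f hf hlux
    simp only [luxNorm] at hlux
    obtain ⟨t, ht, hI⟩ := inf_ne_top_iff.1 hlux
    set Cα := Real.exp (α * Real.log (2*α) + 4*(α+2)) with hCα
    set Dα := (2:ℝ)^α * α^(α+2:ℝ) with hDα
    have hCα0 : (0:ℝ) < Cα := Real.exp_pos _
    have hDα0 : (0:ℝ) ≤ Dα := by
      rw [hDα]
      have := Real.rpow_nonneg (by norm_num : (0:ℝ) ≤ 2) α
      have := Real.rpow_nonneg hα.le (α+2:ℝ)
      positivity
    -- measurability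
    have humeas : Measurable (fun x : ℝ => Real.log (1/x^(1/α))) := by
      apply Real.measurable_log.comp
      exact measurable_const.div (measurable_id.pow_const _)
    have hpmeas : Measurable (fun x : ℝ =>
        1 + Real.log (Real.log (1/x^(1/α))) / Real.log (1/x^(1/α))) :=
      measurable_const.add ((Real.measurable_log.comp humeas).div humeas)
    have hgmeas : Measurable (fun x : ℝ => |f x| / t) := hf.abs.div_const t
    have hmeas1 : Measurable (fun x : ℝ => ENNReal.ofReal (Cα * (|f x|/t) ^
        (1 + Real.log (Real.log (1/x^(1/α))) / Real.log (1/x^(1/α))))) :=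
      ENNReal.measurable_ofReal.comp ((hgmeas.pow hpmeas).const_mul Cα)
    have hwmeas : Measurable (fun x : ℝ =>
        ENNReal.ofReal (Dα * (1/(x * Real.log (1/x)^2)))) := by
      apply ENNReal.measurable_ofReal.comp
      apply Measurable.const_mul
      exact measurable_const.div
        (measurable_id.mul ((Real.measurable_log.comp (measurable_const.div measurable_id)).pow_const _))
    -- pointwise estimate
    have hpt : ∀ x ∈ Ioo (0:ℝ) x₀,
        ENNReal.ofReal (|f x|/t * Real.log (Real.exp 1 + |f x|/t)^α) ≤
        ENNReal.ofReal (Cα * (|f x|/t) ^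
          (1 + Real.log (Real.log (1/x^(1/α))) / Real.log (1/x^(1/α))))
        + ENNReal.ofReal (Dα * (1/(x * Real.log (1/x)^2))) := by
      intro x hx
      obtain ⟨huval, huK⟩ := hufact x hx
      obtain ⟨hx0, hxx₀⟩ := hx
      set u := Real.log (1/x^(1/α)) with hu
      have hu0 : 0 < u := lt_trans hKpos huK
      have hlogu : 1 ≤ Real.log u := by
        have h1 : Real.log (Real.exp 2) ≤ Real.log u :=
          Real.log_le_log (Real.exp_pos 2) (le_trans hK1 huK.le)
        rw [Real.log_exp] at h1; linarith
      have hau : 1 ≤ α*u := by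
        nlinarith [mul_le_mul_of_nonneg_left huK.le hα.le]
      have hv1 : 1 ≤ α*u - (α+2)*Real.log u := by
        have hs1 : Real.log u ≤ 2*Real.sqrt u := log_le_two_sqrt hu0
        have hs2 : Real.sqrt u ^ 2 = u := Real.sq_sqrt hu0.le
        have hs3 : (2*α+5)/α ≤ Real.sqrt u := by
          have h4 : Real.sqrt (((2*α+5)/α)^2) ≤ Real.sqrt K := Real.sqrt_le_sqrt hK2
          rw [Real.sqrt_sq (by positivity)] at h4
          have h5 : Real.sqrt K ≤ Real.sqrt u := Real.sqrt_le_sqrt huK.le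
          linarith
        have hs4 : 2*α+5 ≤ Real.sqrt u * α := (div_le_iff₀ hα).1 hs3
        have hs5 : (2:ℝ) ≤ (2*α+5)/α := by rw [le_div_iff₀ hα]; nlinarith
        have hs6 : (2:ℝ) ≤ Real.sqrt u := le_trans hs5 hs3
        nlinarith [Real.sqrt_nonneg u]
      have hmain := pointwise_bound α u hα hu0 hlogu hau hv1 (|f x|/t) (by positivity)
      have hLpos : 0 < Real.log (1/x) := by
        rw [one_div, Real.log_inv]
        have : Real.log x < 0 := Real.log_neg hx0 (lt_trans hxx₀ hx₀lt1)
        linarith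
      have hαu : α * u = Real.log (1/x) := by rw [huval]; field_simp
      have hH : Real.exp (α*u - (α+2)*Real.log u) * (2*(α*u))^α
          = Dα * (1/(x * Real.log (1/x)^2)) := by
        have h1 : Real.exp (α*u - (α+2)*Real.log u)
            = Real.exp (α*u) * u ^ (-(α+2) : ℝ) := by
          rw [Real.rpow_def_of_pos hu0, ← Real.exp_add]
          congr 1
          ring
        have h2 : Real.exp (α*u) = 1/x := by
          rw [hαu]
          exact Real.exp_log (by positivity)
        have h3 : (2*(α*u))^α = 2^α * Real.log (1/x)^α := by
          rw [hαu, Real.mul_rpow (by norm_num) hLpos.le]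
        have h4 : u ^ (-(α+2) : ℝ) = α^(α+2:ℝ) * Real.log (1/x) ^ (-(α+2) : ℝ) := by
          rw [huval, Real.div_rpow hLpos.le hα.le, div_eq_mul_inv,
            Real.rpow_neg hα.le, inv_inv]
          ring
        rw [h1, h2, h3, h4]
        have h5 : Real.log (1/x)^(-(α+2):ℝ) * Real.log (1/x)^α
            = Real.log (1/x)^(-(2:ℝ)) := by
          rw [← Real.rpow_add hLpos]
          congr 1
          ring
        have h6 : Real.log (1/x)^(-(2:ℝ)) = 1/(Real.log (1/x)^2) := by
          rw [Real.rpow_neg hLpos.le, Real.rpow_two]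
          exact (one_div _).symm
        rw [hDα]
        calc (1/x) * (α^(α+2:ℝ) * Real.log (1/x)^(-(α+2):ℝ)) * (2^α * Real.log (1/x)^α)
            = 2^α * α^(α+2:ℝ) * ((1/x) * (Real.log (1/x)^(-(α+2):ℝ) * Real.log (1/x)^α)) := by
              ring
          _ = 2^α * α^(α+2:ℝ) * ((1/x) * (1/(Real.log (1/x)^2))) := by rw [h5, h6]
          _ = 2^α * α^(α+2:ℝ) * (1/(x * Real.log (1/x)^2)) := by
              rw [div_mul_div_comm, one_mul]
      calc ENNReal.ofReal (|f x|/t * Real.log (Real.exp 1 + |f x|/t)^α)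
          ≤ ENNReal.ofReal (Cα * (|f x|/t) ^ (1 + Real.log u / u)
              + Dα * (1/(x * Real.log (1/x)^2))) := by
            apply ENNReal.ofReal_le_ofReal
            rw [← hH]
            exact hmain
        _ ≤ _ := ENNReal.ofReal_add_le
    -- integral bound
    have hMfin := M_fin hx₀0 (by linarith : 1 ≤ Real.log (1/x₀))
    have hJle : (∫⁻ x in Ioo (0:ℝ) x₀,
        ENNReal.ofReal (|f x|/t * Real.log (Real.exp 1 + |f x|/t)^α)) ≤
        ENNReal.ofReal Cα * 1 + ENNReal.ofReal Dα *
          (∫⁻ x in Ioo (0:ℝ) x₀, ENNReal.ofReal (1/(x * Real.log (1/x)^2))) := by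
      calc (∫⁻ x in Ioo (0:ℝ) x₀,
            ENNReal.ofReal (|f x|/t * Real.log (Real.exp 1 + |f x|/t)^α))
          ≤ ∫⁻ x in Ioo (0:ℝ) x₀,
              (ENNReal.ofReal (Cα * (|f x|/t) ^
                (1 + Real.log (Real.log (1/x^(1/α))) / Real.log (1/x^(1/α))))
              + ENNReal.ofReal (Dα * (1/(x * Real.log (1/x)^2)))) :=
            setLIntegral_mono (hmeas1.add hwmeas) hpt
        _ = (∫⁻ x in Ioo (0:ℝ) x₀, ENNReal.ofReal (Cα * (|f x|/t) ^
                (1 + Real.log (Real.log (1/x^(1/α))) / Real.log (1/x^(1/α)))))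
            + ∫⁻ x in Ioo (0:ℝ) x₀, ENNReal.ofReal (Dα * (1/(x * Real.log (1/x)^2))) :=
            lintegral_add_left hmeas1 _
        _ = ENNReal.ofReal Cα * (∫⁻ x in Ioo (0:ℝ) x₀, ENNReal.ofReal ((|f x|/t) ^
                (1 + Real.log (Real.log (1/x^(1/α))) / Real.log (1/x^(1/α)))))
            + ENNReal.ofReal Dα *
              (∫⁻ x in Ioo (0:ℝ) x₀, ENNReal.ofReal (1/(x * Real.log (1/x)^2))) := by
            congr 1
            · simp_rw [ENNReal.ofReal_mul hCα0.le]
              exact lintegral_const_mul' _ _ ENNReal.ofReal_ne_top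
            · simp_rw [ENNReal.ofReal_mul hDα0]
              exact lintegral_const_mul' _ _ ENNReal.ofReal_ne_top
        _ ≤ ENNReal.ofReal Cα * 1 + ENNReal.ofReal Dα *
              (∫⁻ x in Ioo (0:ℝ) x₀, ENNReal.ofReal (1/(x * Real.log (1/x)^2))) := by
            exact add_le_add (mul_le_mul_right hI _) le_rfl
    have hJne : (∫⁻ x in Ioo (0:ℝ) x₀,
        ENNReal.ofReal (|f x|/t * Real.log (Real.exp 1 + |f x|/t)^α)) ≠ ⊤ := by
      apply ne_top_of_le_ne_top _ hJle
      apply ENNReal.add_ne_top.2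
      constructor
      · exact ENNReal.mul_ne_top ENNReal.ofReal_ne_top ENNReal.one_ne_top
      · exact ENNReal.mul_ne_top ENNReal.ofReal_ne_top hMfin.ne
    -- choose s
    set J := (∫⁻ x in Ioo (0:ℝ) x₀,
        ENNReal.ofReal (|f x|/t * Real.log (Real.exp 1 + |f x|/t)^α)) with hJdef
    clear_value J
    set s := t*(1 + J.toReal) with hs
    clear_value s
    have hJt0 : 0 ≤ J.toReal := ENNReal.toReal_nonneg
    have hs0 : 0 < s := by
      rw [hs]
      nlinarith
    have hts : t ≤ s := by
      rw [hs]
      nlinarith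
    simp only [orliczNorm]
    apply inf_ne_top_iff.2
    refine ⟨s, hs0, ?_⟩
    have hone_le_e : (1:ℝ) ≤ Real.exp 1 := by
      nlinarith [Real.add_one_le_exp (1:ℝ)]
    have hptB : ∀ x : ℝ,
        ENNReal.ofReal ((|f x|/s) * Real.log (Real.exp 1 + |f x|/s)^α) ≤
        ENNReal.ofReal (t/s) *
          ENNReal.ofReal ((|f x|/t) * Real.log (Real.exp 1 + |f x|/t)^α) := by
      intro x
      rw [← ENNReal.ofReal_mul (div_nonneg ht.le hs0.le)]
      apply ENNReal.ofReal_le_ofReal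
      have e1 : |f x|/s = (t/s) * (|f x|/t) := by
        field_simp
      have harg : |f x|/s ≤ |f x|/t := by
        rw [div_le_div_iff₀ hs0 ht]
        exact mul_le_mul_of_nonneg_left hts (abs_nonneg _)
      have hlogle : Real.log (Real.exp 1 + |f x|/s) ^ α
          ≤ Real.log (Real.exp 1 + |f x|/t)^α := by
        apply Real.rpow_le_rpow
        · apply Real.log_nonneg
          have : (0:ℝ) ≤ |f x|/s := by positivity
          linarith
        · apply Real.log_le_log (by positivity) (by linarith)
        · exact hα.le
      calc |f x|/s * Real.log (Real.exp 1 + |f x|/s)^α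
          = (t/s) * (|f x|/t) * Real.log (Real.exp 1 + |f x|/s)^α := by rw [← e1]
        _ ≤ (t/s) * (|f x|/t) * Real.log (Real.exp 1 + |f x|/t)^α := by
            apply mul_le_mul_of_nonneg_left hlogle (by positivity)
        _ = (t/s) * ((|f x|/t) * Real.log (Real.exp 1 + |f x|/t)^α) := by ring
    calc ∫⁻ x in Ioo (0:ℝ) x₀,
          ENNReal.ofReal ((|f x|/s) * Real.log (Real.exp 1 + |f x|/s)^α)
        ≤ ∫⁻ x in Ioo (0:ℝ) x₀, ENNReal.ofReal (t/s) *
            ENNReal.ofReal ((|f x|/t) * Real.log (Real.exp 1 + |f x|/t)^α) :=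
          lintegral_mono (fun x => hptB x)
      _ = ENNReal.ofReal (t/s) * J := by
          rw [hJdef]
          exact lintegral_const_mul' _ _ ENNReal.ofReal_ne_top
      _ = ENNReal.ofReal (t/s) * ENNReal.ofReal J.toReal := by
          rw [ENNReal.ofReal_toReal hJne]
      _ = ENNReal.ofReal ((t/s) * J.toReal) := by
          rw [ENNReal.ofReal_mul (div_nonneg ht.le hs0.le)]
      _ ≤ 1 := by
          apply ENNReal.ofReal_le_one.2
          rw [div_mul_eq_mul_div, div_le_one hs0, hs]
          nlinarith
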